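/- Let p < q < r be primes with p dividing q − 1 and p dividing r − 1, and let t be an integer whose residue class modulo qr is a unit of multiplicative order p, with t of order p modulo q and of order p modulo r. Then the group G(p, qr, t) has exactly p + (q·r − 1)/p conjugacy classes. -/

import Mathlib

/-- The units of `ZMod e` act on `Multiplicative (ZMod e)` as (multiplicative) automorphisms. -/
def unitsMulAut (e : ℕ) : (ZMod e)ˣ →* MulAut (Multiplicative (ZMod e)) where
  toFun u := AddEquiv.toMultiplicative (DistribMulAction.toAddAut (ZMod e)ˣ (ZMod e) u)
  map_one' := by
    ext x
    show Multiplicative.ofAdd ((1 : (ZMod e)ˣ) • x.toAdd) = x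
    simp
  map_mul' u v := by
    ext x
    show Multiplicative.ofAdd (((u * v) : (ZMod e)ˣ) • x.toAdd)
      = Multiplicative.ofAdd (u • v • x.toAdd)
    rw [mul_smul]

/-- The homomorphism `Multiplicative (ZMod d) →* (ZMod e)ˣ` sending `a` to `u ^ a`,
well defined since `u ^ d = 1`. -/
def zmodPowHom {e : ℕ} (d : ℕ) (u : (ZMod e)ˣ) (hu : u ^ d = 1) :
    Multiplicative (ZMod d) →* (ZMod e)ˣ :=
  AddMonoidHom.toMultiplicativeLeft
    (ZMod.lift d ⟨zmultiplesHom (Additive (ZMod e)ˣ) (Additive.ofMul u), by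
      simpa [zmultiplesHom, ← ofMul_pow] using congrArg Additive.ofMul hu⟩)

/-- The group `G(d,e,t)` where `u` is the unit of `ZMod e` given by `t` :
the semidirect product `(ℤ/eℤ) ⋊ (ℤ/dℤ)` in which `a ∈ ℤ/dℤ` acts on `ℤ/eℤ` by
`b ↦ t ^ a * b`.  This is the group with presentation
`⟨x, y | x ^ d = 1, y ^ e = 1, x⁻¹ * y * x = y ^ t⟩`, the element `(b, a)`
corresponding to `x ^ a * y ^ b`. -/
abbrev Gdet (d e : ℕ) (u : (ZMod e)ˣ) (hu : u ^ d = 1) : Type :=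
  SemidirectProduct (Multiplicative (ZMod e)) (Multiplicative (ZMod d))
    ((unitsMulAut e).comp (zmodPowHom d u hu))

lemma zmodPowHom_intCast {e : ℕ} (d : ℕ) (u : (ZMod e)ˣ) (hu : u ^ d = 1) (z : ℤ) :
    zmodPowHom d u hu (Multiplicative.ofAdd ((z : ZMod d))) = u ^ z := by
  simp [zmodPowHom, AddMonoidHom.coe_toMultiplicativeLeft, ZMod.lift_coe]

lemma zmodPowHom_apply {e : ℕ} (d : ℕ) [NeZero d] (u : (ZMod e)ˣ) (hu : u ^ d = 1)
    (a : ZMod d) :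
    zmodPowHom d u hu (Multiplicative.ofAdd a) = u ^ a.val := by
  have h : a = ((a.val : ℤ) : ZMod d) := by
    push_cast
    rw [ZMod.natCast_val, ZMod.cast_id]
  conv_lhs => rw [h]
  rw [zmodPowHom_intCast, zpow_natCast]

open SemidirectProduct in
lemma semidirect_conj_formula {N H : Type*} [Group N] [CommGroup H] {φ : H →* MulAut N}
    (c g : N ⋊[φ] H) :
    c * g * c⁻¹ = ⟨c.left * φ c.right g.left * (φ g.right c.left)⁻¹, g.right⟩ := by
  have key : ∀ x, (φ c.right) ((φ g.right) ((φ c.right)⁻¹ x)) = φ g.right x := by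
    intro x
    rw [← map_inv φ, ← MulAut.mul_apply, ← MulAut.mul_apply, ← map_mul, ← map_mul,
      mul_comm c.right, mul_assoc, mul_inv_cancel, mul_one]
  ext
  · simp [mul_assoc, map_mul, key]
    exact key _
  · simp [mul_comm c.right g.right, mul_assoc]

/-- Key unit lemma: any element `≠ 1` of the cyclic group generated by `u` becomes a unit
after subtracting `1`. -/
lemma sub_one_isUnit (p q r : ℕ) (hp : p.Prime) (hq : q.Prime) (hr : r.Prime) (t : ℤ)
    (u : (ZMod (q * r))ˣ) (hu : (u : ZMod (q * r)) = (t : ZMod (q * r)))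
    (hord : orderOf u = p)
    (uq : (ZMod q)ˣ) (huq : (uq : ZMod q) = (t : ZMod q)) (hordq : orderOf uq = p)
    (ur : (ZMod r)ˣ) (hur : (ur : ZMod r) = (t : ZMod r)) (hordr : orderOf ur = p)
    (v : (ZMod (q * r))ˣ) (hv : v ∈ Subgroup.zpowers u) (hv1 : v ≠ 1) :
    IsUnit ((v : ZMod (q * r)) - 1) := by
  haveI : NeZero (q * r) := ⟨Nat.mul_ne_zero hq.pos.ne' hr.pos.ne'⟩
  have hfin : IsOfFinOrder u := orderOf_pos_iff.mp (by rw [hord]; exact hp.pos)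
  obtain ⟨n, hn⟩ := hfin.mem_powers_iff_mem_zpowers.mpr hv
  have hpn : ¬ p ∣ n := by
    intro hd
    apply hv1
    rw [← hn, ← orderOf_dvd_iff_pow_eq_one, hord]
    exact hd
  set x : ZMod (q * r) := (v : ZMod (q * r)) - 1 with hx
  -- reduction mod q
  have hcq : ∀ (s : ℕ) (hs : s ∣ q * r) (us : (ZMod s)ˣ),
      ((us : ZMod s) = (t : ZMod s)) → orderOf us = p →
      ¬ s ∣ x.val := by
    intro s hs us hus hords hdvd
    have h0 : ((x.val : ZMod s)) = 0 := (ZMod.natCast_eq_zero_iff _ _).mpr hdvd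
    rw [ZMod.natCast_val] at h0
    have h0' : (ZMod.castHom hs (ZMod s)) x = 0 := h0
    rw [hx, ← hn, map_sub, map_one, Units.val_pow_eq_pow_val, map_pow, hu,
      map_intCast, ← hus, ← Units.val_pow_eq_pow_val, sub_eq_zero] at h0'
    have : us ^ n = 1 := Units.ext h0'
    rw [← orderOf_dvd_iff_pow_eq_one, hords] at this
    exact hpn this
  have copq : x.val.Coprime q :=
    (hq.coprime_iff_not_dvd.mpr (hcq q (dvd_mul_right q r) uq huq hordq)).symm
  have copr : x.val.Coprime r :=
    (hr.coprime_iff_not_dvd.mpr (hcq r (dvd_mul_left r q) ur hur hordr)).symm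
  have hxx : ((x.val : ZMod (q * r))) = x := by rw [ZMod.natCast_val, ZMod.cast_id]
  rw [← hxx]
  exact (ZMod.isUnit_iff_coprime _ _).mpr (copq.mul_right copr)


section Aux

variable {p e : ℕ} (u : (ZMod e)ˣ) (hu : u ^ p = 1)

/-- unfolding of the action in `Gdet`. -/
lemma Gdet_phi_toAdd (k : Multiplicative (ZMod p)) (n : Multiplicative (ZMod e)) :
    ((((unitsMulAut e).comp (zmodPowHom p u hu)) k) n).toAdd
      = ((zmodPowHom p u hu k : (ZMod e)ˣ) : ZMod e) * n.toAdd := rfl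

/-- The conjugacy invariant of an element of `Gdet`. -/
def classInv (g : Gdet p e u hu) :
    {a : ZMod p // a ≠ 0} ⊕ MulAction.orbitRel.Quotient (Subgroup.zpowers u) (ZMod e) :=
  if h : g.right.toAdd = (0 : ZMod p) then .inr (Quotient.mk'' g.left.toAdd)
  else .inl ⟨g.right.toAdd, h⟩

lemma zmodPowHom_mem_zpowers [NeZero p] (a : Multiplicative (ZMod p)) :
    zmodPowHom p u hu a ∈ Subgroup.zpowers u := by
  rw [show a = Multiplicative.ofAdd a.toAdd from rfl, zmodPowHom_apply]
  exact Subgroup.pow_mem _ (Subgroup.mem_zpowers u) _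

lemma classInv_conj [NeZero p] (c g : Gdet p e u hu) :
    classInv u hu (c * g * c⁻¹) = classInv u hu g := by
  rw [semidirect_conj_formula]
  unfold classInv
  by_cases h : g.right.toAdd = (0 : ZMod p)
  · rw [dif_pos h, dif_pos h]
    have hg1 : g.right = 1 := h
    congr 1
    apply Quotient.sound'
    rw [MulAction.orbitRel_apply]
    refine ⟨⟨zmodPowHom p u hu c.right, zmodPowHom_mem_zpowers u hu c.right⟩, ?_⟩
    show ((zmodPowHom p u hu c.right : (ZMod e)ˣ) : ZMod e) * g.left.toAdd = _
    simp only [hg1, map_one, MulAut.one_apply, toAdd_mul, toAdd_inv]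
    rw [Gdet_phi_toAdd]
    ring
  · rw [dif_neg h, dif_neg h]

lemma classInv_sep [NeZero p]
    (hunit : ∀ v : (ZMod e)ˣ, v ∈ Subgroup.zpowers u → v ≠ 1 → IsUnit ((v : ZMod e) - 1))
    (horder : ∀ a : Multiplicative (ZMod p), a.toAdd ≠ 0 → zmodPowHom p u hu a ≠ 1)
    (g₁ g₂ : Gdet p e u hu) (hf : classInv u hu g₁ = classInv u hu g₂) :
    IsConj g₁ g₂ := by
  unfold classInv at hf
  by_cases h1 : g₁.right.toAdd = (0 : ZMod p)
  · rw [dif_pos h1] at hf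
    by_cases h2 : g₂.right.toAdd = (0 : ZMod p)
    · rw [dif_pos h2] at hf
      have hq := Quotient.exact' (Sum.inr.inj hf)
      rw [MulAction.orbitRel_apply] at hq
      obtain ⟨σ, hσ⟩ := hq
      obtain ⟨z, hz⟩ := Subgroup.mem_zpowers_iff.mp σ.2
      symm
      rw [isConj_iff]
      refine ⟨⟨1, Multiplicative.ofAdd ((z : ZMod p))⟩, ?_⟩
      rw [semidirect_conj_formula]
      ext
      · simp only [map_one, mul_one, one_mul, inv_one]
        refine Multiplicative.toAdd.injective ?_
        rw [Gdet_phi_toAdd, zmodPowHom_intCast, hz]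
        exact hσ
      · show Multiplicative.toAdd g₂.right = Multiplicative.toAdd g₁.right
        rw [h1, h2]
    · rw [dif_neg h2] at hf
      simp at hf
  · rw [dif_neg h1] at hf
    by_cases h2 : g₂.right.toAdd = (0 : ZMod p)
    · rw [dif_pos h2] at hf
      simp at hf
    · rw [dif_neg h2] at hf
      have ha : g₁.right.toAdd = g₂.right.toAdd := congrArg Subtype.val (Sum.inl.inj hf)
      have hrr : g₁.right = g₂.right := Multiplicative.toAdd.injective ha
      set v := zmodPowHom p u hu g₁.right with hv
      have hv1 : v ≠ 1 := horder _ h1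
      obtain ⟨w, hw⟩ := (hunit v (zmodPowHom_mem_zpowers u hu g₁.right) hv1).neg
      rw [isConj_iff]
      refine ⟨⟨Multiplicative.ofAdd (((w⁻¹ : (ZMod e)ˣ) : ZMod e)
        * (g₂.left.toAdd - g₁.left.toAdd)), 1⟩, ?_⟩
      rw [semidirect_conj_formula]
      ext
      · refine Multiplicative.toAdd.injective ?_
        simp only [map_one, MulAut.one_apply, toAdd_mul, toAdd_inv, toAdd_ofAdd]
        rw [Gdet_phi_toAdd, toAdd_ofAdd, ← hv]
        have hw' : ((w : ZMod e)) = 1 - (v : ZMod e) := by rw [hw]; ring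
        have key : (1 - (v : ZMod e)) * (((w⁻¹ : (ZMod e)ˣ) : ZMod e)
            * (g₂.left.toAdd - g₁.left.toAdd)) = g₂.left.toAdd - g₁.left.toAdd := by
          rw [← hw']; exact Units.mul_inv_cancel_left _ _
        have e1 : ∀ y : ZMod e, Multiplicative.toAdd (α := ZMod e) y = y := fun _ => rfl
        linear_combination (norm := skip) key
        change ((w⁻¹ : (ZMod e)ˣ) : ZMod e) * (g₂.left.toAdd - g₁.left.toAdd) + g₁.left.toAdd
          + -((v : ZMod e) * (((w⁻¹ : (ZMod e)ˣ) : ZMod e) * (g₂.left.toAdd - g₁.left.toAdd)))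
          + (g₂.left.toAdd - g₁.left.toAdd) - (g₂.left.toAdd + (1 - (v : ZMod e))
          * (((w⁻¹ : (ZMod e)ˣ) : ZMod e) * (g₂.left.toAdd - g₁.left.toAdd))) = 0
        ring
      · exact hrr

end Aux

/-- **Class number of groups of order `pqr` with `d = p` (conditions A and B).**
Let `p < q < r` be primes with `p ∣ q - 1` and `p ∣ r - 1`, and let `t` be an integer
whose residue class modulo `q * r` is a unit of multiplicative order `p`, with `t` of
order `p` modulo `q` and of order `p` modulo `r`.  Then `G(p, qr, t)` has exactly
`p + (q * r - 1) / p` conjugacy classes. -/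
theorem classNumber_pqr_condAB (p q r : ℕ) (hp : p.Prime) (hq : q.Prime) (hr : r.Prime)
    (hpq : p < q) (hqr : q < r) (hA : p ∣ q - 1) (hB : p ∣ r - 1) (t : ℤ)
    (u : (ZMod (q * r))ˣ) (hu : (u : ZMod (q * r)) = (t : ZMod (q * r)))
    (hord : orderOf u = p)
    (uq : (ZMod q)ˣ) (huq : (uq : ZMod q) = (t : ZMod q)) (hordq : orderOf uq = p)
    (ur : (ZMod r)ˣ) (hur : (ur : ZMod r) = (t : ZMod r)) (hordr : orderOf ur = p) :
    Nat.card (ConjClasses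
        (Gdet p (q * r) u (by rw [← hord]; exact pow_orderOf_eq_one u)))
      = p + (q * r - 1) / p := by
  classical
  haveI : NeZero (q * r) := ⟨Nat.mul_ne_zero hq.pos.ne' hr.pos.ne'⟩
  haveI : NeZero p := ⟨hp.pos.ne'⟩
  have hu' : u ^ p = 1 := by rw [← hord]; exact pow_orderOf_eq_one u
  have hunit : ∀ v : (ZMod (q * r))ˣ, v ∈ Subgroup.zpowers u → v ≠ 1 →
      IsUnit ((v : ZMod (q * r)) - 1) :=
    fun v hv hv1 => sub_one_isUnit p q r hp hq hr t u hu hord uq huq hordq ur hur hordr v hv hv1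
  have horder : ∀ a : Multiplicative (ZMod p), a.toAdd ≠ 0 → zmodPowHom p u hu' a ≠ 1 := by
    intro a h0 h1
    rw [show a = Multiplicative.ofAdd a.toAdd from rfl, zmodPowHom_apply] at h1
    rw [← orderOf_dvd_iff_pow_eq_one, hord] at h1
    have hlt : a.toAdd.val < p := ZMod.val_lt _
    have hne : a.toAdd.val ≠ 0 := fun hh => h0 (by rwa [ZMod.val_eq_zero] at hh)
    exact absurd (Nat.le_of_dvd (Nat.pos_of_ne_zero hne) h1) (not_le.mpr hlt)
  set G := Gdet p (q * r) u hu' with hG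
  have hsound : ∀ a b : G, IsConj a b → classInv u hu' a = classInv u hu' b := by
    intro a b hab
    obtain ⟨c, hc⟩ := isConj_iff.mp hab
    rw [← hc, classInv_conj]
  set Q := MulAction.orbitRel.Quotient (Subgroup.zpowers u) (ZMod (q * r)) with hQ
  let F : ConjClasses G → {a : ZMod p // a ≠ 0} ⊕ Q := Quotient.lift (classInv u hu') hsound
  have hFbij : Function.Bijective F := by
    constructor
    · intro x y
      refine Quotient.inductionOn₂ x y ?_
      intro a b h
      exact Quotient.sound (classInv_sep u hu' hunit horder a b h)
    · intro s
      rcases s with ⟨a, ha⟩ | ω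
      · refine ⟨Quotient.mk _ (⟨1, Multiplicative.ofAdd a⟩ : G), ?_⟩
        show classInv u hu' _ = _
        unfold classInv
        rw [dif_neg (show ¬ Multiplicative.toAdd
          (((⟨1, Multiplicative.ofAdd a⟩ : G)).right) = 0 from ha)]
        rfl
      · refine Quotient.inductionOn ω ?_
        intro b
        refine ⟨Quotient.mk _ (⟨Multiplicative.ofAdd b, 1⟩ : G), ?_⟩
        show classInv u hu' _ = _
        unfold classInv
        rw [dif_pos (show Multiplicative.toAdd
          (((⟨Multiplicative.ofAdd b, 1⟩ : G)).right) = 0 from rfl)]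
        rfl
  haveI : Finite G := Finite.of_injective (fun g : G => (g.left, g.right))
    (fun a b hh => SemidirectProduct.ext (congrArg Prod.fst hh) (congrArg Prod.snd hh))
  haveI : Finite Q := Quotient.finite _
  have hcard1 : Nat.card (ConjClasses G) = Nat.card ({a : ZMod p // a ≠ 0} ⊕ Q) :=
    Nat.card_congr (Equiv.ofBijective F hFbij)
  rw [hcard1, Nat.card_sum]
  have hleft : Nat.card {a : ZMod p // a ≠ 0} = p - 1 := by
    rw [Nat.card_eq_fintype_card, Fintype.card_subtype_compl, ZMod.card,
      Fintype.card_subtype_eq]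
  -- orbit counting
  letI : Fintype Q := Fintype.ofFinite Q
  letI : Fintype (Subgroup.zpowers u) := Fintype.ofFinite _
  letI : ∀ b : ZMod (q * r), Fintype (MulAction.orbit (Subgroup.zpowers u) b) :=
    fun b => Fintype.ofFinite _
  have horb : ∀ b : ZMod (q * r), b ≠ 0 →
      Nat.card (MulAction.orbit (Subgroup.zpowers u) b) = p := by
    intro b hb
    have hstab : MulAction.stabilizer (Subgroup.zpowers u) b = ⊥ := by
      rw [eq_bot_iff]
      intro σ hσ
      rw [MulAction.mem_stabilizer_iff] at hσ
      rw [Subgroup.mem_bot]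
      by_contra hσ1
      have h1 : (σ : (ZMod (q * r))ˣ) ≠ 1 := fun hh =>
        hσ1 (OneMemClass.coe_eq_one.mp hh)
      have hunit' := hunit (σ : (ZMod (q * r))ˣ) σ.2 h1
      have hss : (((σ : (ZMod (q * r))ˣ) : ZMod (q * r))) * b = b := hσ
      have hz : ((((σ : (ZMod (q * r))ˣ) : ZMod (q * r))) - 1) * b = 0 := by
        rw [sub_mul, hss]; ring
      exact hb (hunit'.mul_right_eq_zero.mp hz)
    have hos := MulAction.card_orbit_mul_card_stabilizer_eq_card_group
      (Subgroup.zpowers u) b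
    have hos' : Nat.card (MulAction.orbit (Subgroup.zpowers u) b)
        * Nat.card (MulAction.stabilizer (Subgroup.zpowers u) b)
        = Nat.card (Subgroup.zpowers u) := by
      rw [Nat.card_eq_fintype_card, Nat.card_eq_fintype_card, Nat.card_eq_fintype_card]
      exact hos
    rw [hstab, Subgroup.card_bot, mul_one, Nat.card_zpowers, hord] at hos'
    exact hos' 
  have horb0 : Nat.card (MulAction.orbit (Subgroup.zpowers u) (0 : ZMod (q * r))) = 1 := by
    have hor : MulAction.orbit (Subgroup.zpowers u) (0 : ZMod (q * r)) = {0} := by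
      apply Set.eq_singleton_iff_unique_mem.mpr
      refine ⟨MulAction.mem_orbit_self 0, ?_⟩
      rintro x ⟨σ, rfl⟩
      show (((σ : (ZMod (q * r))ˣ) : ZMod (q * r))) * 0 = 0
      ring
    rw [hor, Nat.card_unique]
  -- class formula
  have hsig := Nat.card_congr (MulAction.selfEquivSigmaOrbits (Subgroup.zpowers u)
    (ZMod (q * r)))
  rw [Nat.card_zmod, Nat.card_eq_fintype_card, Fintype.card_sigma] at hsig
  set ω₀ : Q := Quotient.mk'' (0 : ZMod (q * r)) with hω₀
  have hval : ∀ ω : Q, Fintype.card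
      (MulAction.orbit (Subgroup.zpowers u) (Quotient.out ω)) = if ω = ω₀ then 1 else p := by
    intro ω
    by_cases hω : ω = ω₀
    · rw [if_pos hω]
      have h0 : (Quotient.out ω : ZMod (q * r)) = 0 := by
        have := Quotient.exact' (a := Quotient.out ω) (b := (0 : ZMod (q * r)))
          (by rw [Quotient.out_eq']; exact hω)
        rw [MulAction.orbitRel_apply] at this
        obtain ⟨σ, hσ⟩ := this
        rw [← hσ]
        show (((σ : (ZMod (q * r))ˣ) : ZMod (q * r))) * 0 = 0
        ring
      rw [← Nat.card_eq_fintype_card, h0, horb0]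
    · rw [if_neg hω, ← Nat.card_eq_fintype_card]
      refine horb _ (fun h0 => hω ?_)
      rw [← Quotient.out_eq' ω, hω₀]
      exact congrArg _ h0
  rw [Finset.sum_congr rfl (fun ω _ => hval ω)] at hsig
  rw [← Finset.add_sum_erase _ _ (Finset.mem_univ ω₀), if_pos rfl,
    Finset.sum_congr rfl (fun x hx => if_neg (Finset.ne_of_mem_erase hx)),
    Finset.sum_const, Finset.card_erase_of_mem (Finset.mem_univ ω₀),
    Finset.card_univ, smul_eq_mul] at hsig
  -- conclude
  have hQcard : Nat.card Q = Fintype.card Q := Nat.card_eq_fintype_card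
  have hQpos : 0 < Fintype.card Q := Fintype.card_pos_iff.mpr ⟨ω₀⟩
  rw [hleft, hQcard]
  -- hsig : q * r = 1 + (Fintype.card Q - 1) * p
  have hdiv : (q * r - 1) / p = Fintype.card Q - 1 := by
    have h1 : q * r - 1 = (Fintype.card Q - 1) * p := by omega
    rw [h1, Nat.mul_div_cancel _ hp.pos]
  rw [hdiv]
  have hp1 : 1 ≤ p := hp.pos
  omega
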